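/- Let N ≥ 1 be an integer, ε, ε' ∈ {0,1}, and w, w' ∈ ℂ with Re w < 0 and Re w' < 0. Then the following resummation identity of absolutely convergent sums holds: Σ_{m,n ∈ ℤ} Σ_{a=0}^{2N−1} Σ_{c=0}^{2N−1} exp(iπ(c + ε'/2)(n − m)/N) · exp( w·((2a+ε)/(4N) + n)² + w'·((2a+ε)/(4N) + m)² ) = 2N · Σ_{n,k ∈ ℤ} (−1)^{ε'k} · exp( w·((2n+ε)/(4N) + Nk)² + w'·((2n+ε)/(4N) − Nk)² ). (This is the resummation that converts the orbit-average over the lattice L_{1/(2N)} into the Ashkin-Teller spin correlator with spectrum Δ_{n,m} = (n/(2N) + mN)², Δ̄_{n,m} = (n/(2N) − mN)².) -/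

import Mathlib

open Complex

lemma aux_summable_exp_sq {b : ℝ} (hb : b < 0) :
    Summable fun n : ℤ => Real.exp (b * (n : ℝ) ^ 2) := by
  have hr0 : (0:ℝ) ≤ Real.exp b := (Real.exp_pos b).le
  have hr1 : Real.exp b < 1 := by
    have := Real.exp_lt_exp.mpr hb; simpa using this
  have hgeo : Summable fun k : ℕ => Real.exp b ^ k := summable_geometric_of_lt_one hr0 hr1
  have hsum : Summable fun n : ℤ => Real.exp b ^ n.natAbs := by
    apply Summable.of_nat_of_neg <;> simpa using hgeo
  refine hsum.of_nonneg_of_le (fun n => (Real.exp_pos _).le) (fun n => ?_)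
  rw [← Real.exp_nat_mul]
  apply Real.exp_le_exp.mpr
  have h1 : (n.natAbs : ℝ) ^ 2 = (n : ℝ) ^ 2 := by
    rw [Nat.cast_natAbs]; push_cast; exact _root_.sq_abs _
  have h2 : (n.natAbs : ℝ) ≤ (n.natAbs : ℝ) * (n.natAbs : ℝ) := by
    exact_mod_cast Nat.le_mul_self n.natAbs
  nlinarith [h1, h2]

lemma aux_char_sum (N : ℕ) (hN : 1 ≤ N) (d : ℤ) :
    ∑ c ∈ Finset.range (2 * N), Complex.exp (Complex.I * (Real.pi : ℂ) * (c : ℂ) * (d : ℂ) / (N : ℂ))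
      = if (2 * (N : ℤ)) ∣ d then (2 * (N : ℕ) : ℂ) else 0 := by
  have hNC : (N : ℂ) ≠ 0 := Nat.cast_ne_zero.mpr (by omega)
  have hπ : (Real.pi : ℂ) ≠ 0 := ofReal_ne_zero.mpr Real.pi_ne_zero
  set z : ℂ := Complex.I * (Real.pi : ℂ) * (d : ℂ) / (N : ℂ) with hz
  have hterm : ∀ c : ℕ, Complex.exp (Complex.I * (Real.pi : ℂ) * (c : ℂ) * (d : ℂ) / (N : ℂ))
      = Complex.exp z ^ c := by
    intro c
    rw [← Complex.exp_nat_mul]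
    congr 1
    rw [hz]
    ring
  simp_rw [hterm]
  by_cases hdvd : (2 * (N : ℤ)) ∣ d
  · obtain ⟨k, hk⟩ := hdvd
    have hz1 : Complex.exp z = 1 := by
      have : z = (k : ℤ) * (2 * (Real.pi : ℂ) * Complex.I) := by
        rw [hz, hk]; push_cast; field_simp
      rw [this]; exact Complex.exp_int_mul_two_pi_mul_I k
    rw [if_pos ⟨k, hk⟩]
    simp [hz1]
  · have hz1 : Complex.exp z ≠ 1 := by
      intro h
      rw [Complex.exp_eq_one_iff] at h
      obtain ⟨m, hm⟩ := h
      apply hdvd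
      refine ⟨m, ?_⟩
      have h0 : Complex.I * (Real.pi : ℂ) ≠ 0 := mul_ne_zero Complex.I_ne_zero hπ
      have hC : (d : ℂ) = 2 * (N : ℂ) * (m : ℂ) := by
        apply mul_left_cancel₀ h0
        have h2 : Complex.I * (Real.pi : ℂ) * (d : ℂ)
            = (Complex.I * (Real.pi : ℂ) * (d : ℂ) / (N : ℂ)) * (N : ℂ) := by
          field_simp
        rw [h2, ← hz, hm]; ring
      exact_mod_cast hC
    rw [geom_sum_eq hz1]
    have hpow : Complex.exp z ^ (2 * N) = 1 := by
      rw [← Complex.exp_nat_mul]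
      have : ((2 * N : ℕ) : ℂ) * z = (d : ℤ) * (2 * (Real.pi : ℂ) * Complex.I) := by
        rw [hz]; push_cast; field_simp
      rw [this]; exact Complex.exp_int_mul_two_pi_mul_I d
    rw [hpow]
    simp [hdvd]

/-- The summand of the Ashkin–Teller correlator. -/
noncomputable def atHH (N : ℕ) (ε ε' : ℤ) (w w' : ℂ) : ℤ × ℤ → ℂ := fun nk =>
  (-1 : ℂ) ^ (ε' * nk.2) *
    Complex.exp (w * ((2 * (nk.1 : ℂ) + (ε : ℂ)) / (4 * (N : ℂ))
        + (N : ℂ) * (nk.2 : ℂ)) ^ 2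
      + w' * ((2 * (nk.1 : ℂ) + (ε : ℂ)) / (4 * (N : ℂ))
        - (N : ℂ) * (nk.2 : ℂ)) ^ 2)

/-- The lattice-sum term after performing the finite character sum over `c`. -/
noncomputable def atGG (N : ℕ) (ε ε' : ℤ) (w w' : ℂ) : ℤ × ℤ → ℂ := fun nm =>
  Complex.exp (Complex.I * (Real.pi : ℂ) * (ε' : ℂ) * (((nm.1 - nm.2 : ℤ) : ℂ))
      / (2 * (N : ℂ))) *
    ((if (2 * (N : ℤ)) ∣ (nm.1 - nm.2) then (2 * (N : ℕ) : ℂ) else 0) *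
      ∑ a ∈ Finset.range (2 * N),
        Complex.exp (w * ((2 * (a : ℂ) + (ε : ℂ)) / (4 * (N : ℂ)) + (nm.1 : ℂ)) ^ 2
          + w' * ((2 * (a : ℂ) + (ε : ℂ)) / (4 * (N : ℂ)) + (nm.2 : ℂ)) ^ 2))

lemma aux_summable_HH (N : ℕ) (hN : 1 ≤ N) (ε ε' : ℤ) (hε : ε = 0 ∨ ε = 1)
    (w w' : ℂ) (hw : w.re < 0) (hw' : w'.re < 0) :
    Summable (atHH N ε ε' w w') := by
  rw [← summable_norm_iff]
  set cc := max w.re w'.re with hcc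
  have hc : cc < 0 := max_lt hw hw'
  have hNR : (0:ℝ) < (N:ℝ) := by exact_mod_cast Nat.pos_of_ne_zero (by omega)
  have hα : cc / (8 * (N:ℝ)^2) < 0 := div_neg_of_neg_of_pos hc (by positivity)
  have hβ : 2 * cc * (N:ℝ)^2 < 0 := mul_neg_of_neg_of_pos (by linarith) (by positivity)
  have hbase := (aux_summable_exp_sq hα).mul_of_nonneg (aux_summable_exp_sq hβ)
    (fun n => (Real.exp_pos _).le) (fun n => (Real.exp_pos _).le)
  refine hbase.of_nonneg_of_le (fun p => norm_nonneg _) ?_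
  rintro ⟨j, k⟩
  have hnorm : ‖atHH N ε ε' w w' (j, k)‖
      = Real.exp (w.re * ((2*(j:ℝ)+(ε:ℝ))/(4*(N:ℝ)) + (N:ℝ)*(k:ℝ))^2
        + w'.re * ((2*(j:ℝ)+(ε:ℝ))/(4*(N:ℝ)) - (N:ℝ)*(k:ℝ))^2) := by
    simp only [atHH]
    rw [norm_mul, norm_zpow, norm_neg, norm_one, one_zpow, one_mul]
    rw [Complex.norm_exp]
    have h1 : w * ((2*(j:ℂ)+(ε:ℂ))/(4*(N:ℂ)) + (N:ℂ)*(k:ℂ))^2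
        + w' * ((2*(j:ℂ)+(ε:ℂ))/(4*(N:ℂ)) - (N:ℂ)*(k:ℂ))^2
        = w * (((((2*(j:ℝ)+(ε:ℝ))/(4*(N:ℝ)) + (N:ℝ)*(k:ℝ))^2 : ℝ)):ℂ)
          + w' * (((((2*(j:ℝ)+(ε:ℝ))/(4*(N:ℝ)) - (N:ℝ)*(k:ℝ))^2 : ℝ)):ℂ) := by
      push_cast; ring
    rw [h1]
    simp only [Complex.add_re, Complex.mul_re, Complex.ofReal_re, Complex.ofReal_im,
      mul_zero, sub_zero]
  rw [hnorm]
  set y : ℝ := (2*(j:ℝ)+(ε:ℝ))/(4*(N:ℝ)) with hy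
  rw [← Real.exp_add]
  apply Real.exp_le_exp.mpr
  have h1 : w.re * (y + (N:ℝ)*(k:ℝ))^2 ≤ cc * (y + (N:ℝ)*(k:ℝ))^2 :=
    mul_le_mul_of_nonneg_right (le_max_left _ _) (sq_nonneg _)
  have h2 : w'.re * (y - (N:ℝ)*(k:ℝ))^2 ≤ cc * (y - (N:ℝ)*(k:ℝ))^2 :=
    mul_le_mul_of_nonneg_right (le_max_right _ _) (sq_nonneg _)
  have hje : ((j:ℝ))^2 ≤ (2*(j:ℝ)+(ε:ℝ))^2 := by
    have hZ : (j:ℤ)^2 ≤ (2*j+ε)^2 := by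
      rcases hε with h|h <;> subst h
      · nlinarith [sq_nonneg j]
      · rcases le_or_gt 0 j with h|h
        · nlinarith
        · have hj : j ≤ -1 := by omega
          nlinarith [mul_nonneg (by linarith : (0:ℤ) ≤ -j-1) (by linarith : (0:ℤ) ≤ -j),
            sq_nonneg (j+1)]
    exact_mod_cast hZ
  have hyj : 2*cc*y^2 ≤ cc/(8*(N:ℝ)^2) * (j:ℝ)^2 := by
    have hy2 : y^2 = (2*(j:ℝ)+(ε:ℝ))^2 / (16*(N:ℝ)^2) := by
      rw [hy, div_pow]
      congr 1
      ring
    have h3 : cc * (2*(j:ℝ)+(ε:ℝ))^2 ≤ cc * (j:ℝ)^2 :=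
      mul_le_mul_of_nonpos_left hje hc.le
    have e1 : 2*cc*((2*(j:ℝ)+(ε:ℝ))^2/(16*(N:ℝ)^2)) = cc*(2*(j:ℝ)+(ε:ℝ))^2/(8*(N:ℝ)^2) := by
      field_simp; ring
    have e2 : cc/(8*(N:ℝ)^2)*(j:ℝ)^2 = cc*(j:ℝ)^2/(8*(N:ℝ)^2) := by ring
    rw [hy2, e1, e2]
    exact (div_le_div_iff_of_pos_right (by positivity : (0:ℝ) < 8*(N:ℝ)^2)).mpr h3
  have hkey : cc*(y + (N:ℝ)*(k:ℝ))^2 + cc*(y - (N:ℝ)*(k:ℝ))^2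
      = 2*cc*y^2 + 2*cc*(N:ℝ)^2*(k:ℝ)^2 := by ring
  linarith [h1, h2, hyj, hkey]

lemma aux_step1 (N : ℕ) (hN : 1 ≤ N) (ε ε' : ℤ) (w w' : ℂ) (nm : ℤ × ℤ) :
    (∑ a ∈ Finset.range (2 * N), ∑ c ∈ Finset.range (2 * N),
        Complex.exp (Complex.I * (Real.pi : ℂ) * ((c : ℂ) + (ε' : ℂ) / 2)
            * ((nm.1 : ℂ) - (nm.2 : ℂ)) / (N : ℂ)) *
          Complex.exp (w * ((2 * (a : ℂ) + (ε : ℂ)) / (4 * (N : ℂ)) + (nm.1 : ℂ)) ^ 2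
            + w' * ((2 * (a : ℂ) + (ε : ℂ)) / (4 * (N : ℂ)) + (nm.2 : ℂ)) ^ 2))
      = atGG N ε ε' w w' nm := by
  have hNC : (N : ℂ) ≠ 0 := Nat.cast_ne_zero.mpr (by omega)
  have hsplit : ∀ c : ℕ,
      Complex.exp (Complex.I * (Real.pi : ℂ) * ((c : ℂ) + (ε' : ℂ) / 2)
          * ((nm.1 : ℂ) - (nm.2 : ℂ)) / (N : ℂ))
        = Complex.exp (Complex.I * (Real.pi : ℂ) * (ε' : ℂ) * (((nm.1 - nm.2 : ℤ) : ℂ))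
            / (2 * (N : ℂ)))
          * Complex.exp (Complex.I * (Real.pi : ℂ) * (c : ℂ) * (((nm.1 - nm.2 : ℤ) : ℂ))
            / (N : ℂ)) := by
    intro c
    rw [← Complex.exp_add]
    congr 1
    push_cast
    field_simp
    ring
  simp only [atGG]
  simp_rw [hsplit, mul_assoc, ← Finset.mul_sum]
  congr 1
  rw [Finset.sum_comm]
  simp_rw [← Finset.mul_sum]
  rw [← Finset.sum_mul]
  congr 1
  rw [← aux_char_sum N hN (nm.1 - nm.2)]
  exact Finset.sum_congr rfl fun c _ => by congr 1; ring

lemma aux_stepB (N : ℕ) (hN : 1 ≤ N) (ε ε' : ℤ) (w w' : ℂ) (m k : ℤ) :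
    atGG N ε ε' w w' (m + 2 * (N : ℤ) * k, m)
      = 2 * (N : ℂ) * ∑ a ∈ Finset.range (2 * N),
          atHH N ε ε' w w' (2 * (N : ℤ) * m + 2 * (N : ℤ) ^ 2 * k + (a : ℤ), k) := by
  have hNC : (N : ℂ) ≠ 0 := Nat.cast_ne_zero.mpr (by omega)
  simp only [atGG, atHH]
  have hd : (m + 2 * (N : ℤ) * k) - m = 2 * (N : ℤ) * k := by ring
  rw [hd, if_pos ⟨k, rfl⟩]
  have hP : Complex.exp (Complex.I * (Real.pi : ℂ) * (ε' : ℂ) * (((2 * (N : ℤ) * k : ℤ) : ℂ))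
      / (2 * (N : ℂ))) = (-1 : ℂ) ^ (ε' * k) := by
    have harg : Complex.I * (Real.pi : ℂ) * (ε' : ℂ) * (((2 * (N : ℤ) * k : ℤ) : ℂ))
        / (2 * (N : ℂ)) = ((ε' * k : ℤ) : ℂ) * ((Real.pi : ℂ) * Complex.I) := by
      push_cast
      field_simp
    rw [harg, Complex.exp_int_mul, Complex.exp_pi_mul_I]
  rw [hP]
  have hterm : ∀ a : ℕ,
      Complex.exp (w * ((2 * (a : ℂ) + (ε : ℂ)) / (4 * (N : ℂ))
            + (((m + 2 * (N : ℤ) * k : ℤ)) : ℂ)) ^ 2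
          + w' * ((2 * (a : ℂ) + (ε : ℂ)) / (4 * (N : ℂ)) + (m : ℂ)) ^ 2)
        = Complex.exp (w * ((2 * (((2 * (N : ℤ) * m + 2 * (N : ℤ) ^ 2 * k + (a : ℤ) : ℤ)) : ℂ)
              + (ε : ℂ)) / (4 * (N : ℂ)) + (N : ℂ) * (k : ℂ)) ^ 2
          + w' * ((2 * (((2 * (N : ℤ) * m + 2 * (N : ℤ) ^ 2 * k + (a : ℤ) : ℤ)) : ℂ)
              + (ε : ℂ)) / (4 * (N : ℂ)) - (N : ℂ) * (k : ℂ)) ^ 2) := by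
    intro a
    congr 1
    push_cast
    field_simp
    ring
  simp_rw [hterm, ← Finset.mul_sum]
  ring

/-- The resummation identity converting the orbit-average over the lattice `L_{1/(2N)}`
into the Ashkin–Teller spin correlator with spectrum
`Δ_{n,m} = (n/(2N) + mN)²`, `Δ̄_{n,m} = (n/(2N) − mN)²`. -/
theorem ashkin_teller_resummation (N : ℕ) (hN : 1 ≤ N) (ε ε' : ℤ)
    (hε : ε = 0 ∨ ε = 1) (hε' : ε' = 0 ∨ ε' = 1) (w w' : ℂ)
    (hw : w.re < 0) (hw' : w'.re < 0) :
    (∑' nm : ℤ × ℤ, ∑ a ∈ Finset.range (2 * N), ∑ c ∈ Finset.range (2 * N),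
        Complex.exp (Complex.I * (Real.pi : ℂ) * ((c : ℂ) + (ε' : ℂ) / 2)
            * ((nm.1 : ℂ) - (nm.2 : ℂ)) / (N : ℂ)) *
          Complex.exp (w * ((2 * (a : ℂ) + (ε : ℂ)) / (4 * (N : ℂ)) + (nm.1 : ℂ)) ^ 2
            + w' * ((2 * (a : ℂ) + (ε : ℂ)) / (4 * (N : ℂ)) + (nm.2 : ℂ)) ^ 2))
      = 2 * (N : ℂ) *
        ∑' nk : ℤ × ℤ, (-1 : ℂ) ^ (ε' * nk.2) *
          Complex.exp (w * ((2 * (nk.1 : ℂ) + (ε : ℂ)) / (4 * (N : ℂ))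
              + (N : ℂ) * (nk.2 : ℂ)) ^ 2
            + w' * ((2 * (nk.1 : ℂ) + (ε : ℂ)) / (4 * (N : ℂ))
              - (N : ℂ) * (nk.2 : ℂ)) ^ 2) := by
  classical
  have hHs : Summable (atHH N ε ε' w w') := aux_summable_HH N hN ε ε' hε w w' hw hw'
  -- the shift map picking out the diagonal `n ≡ m [2N]`
  set g : ℤ × ℤ → ℤ × ℤ := fun q => (q.1 + 2 * (N : ℤ) * q.2, q.1) with hg
  have hginj : Function.Injective g := by
    rintro ⟨a, b⟩ ⟨c, d⟩ h
    simp only [hg, Prod.mk.injEq] at h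
    obtain ⟨h1, h2⟩ := h
    subst h2
    have hN0 : (2 * (N : ℤ)) ≠ 0 := by positivity
    have h3 : b = d := mul_left_cancel₀ hN0 (by linarith : 2 * (N:ℤ) * b = 2 * (N:ℤ) * d)
    rw [h3]
  have hsupp : Function.support (atGG N ε ε' w w') ⊆ Set.range g := by
    intro nm hnm
    rw [Function.mem_support] at hnm
    by_cases hd : (2 * (N : ℤ)) ∣ (nm.1 - nm.2)
    · obtain ⟨k, hk⟩ := hd
      refine ⟨(nm.2, k), ?_⟩
      simp only [hg]
      have : nm.2 + 2 * (N : ℤ) * k = nm.1 := by linarith [hk]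
      rw [this]
    · exfalso
      apply hnm
      simp only [atGG, if_neg hd]
      ring
  -- the explicit bijection onto the spectrum labels
  set ψ : (ℤ × ℤ) × Fin (2 * N) → ℤ × ℤ :=
    fun x => (2 * (N : ℤ) * x.1.1 + 2 * (N : ℤ) ^ 2 * x.1.2 + ((x.2 : ℕ) : ℤ), x.1.2) with hψ
  have hbij : Function.Bijective ψ := by
    constructor
    · rintro ⟨⟨m, k⟩, a⟩ ⟨⟨m', k'⟩, a'⟩ h
      simp only [hψ, Prod.mk.injEq] at h
      obtain ⟨h1, h2⟩ := h
      subst h2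
      have ha : ((a : ℕ) : ℤ) < 2 * (N : ℤ) := by exact_mod_cast a.2
      have ha' : ((a' : ℕ) : ℤ) < 2 * (N : ℤ) := by exact_mod_cast a'.2
      have ha0 : (0 : ℤ) ≤ ((a : ℕ) : ℤ) := Int.natCast_nonneg _
      have ha0' : (0 : ℤ) ≤ ((a' : ℕ) : ℤ) := Int.natCast_nonneg _
      have hNpos : (0 : ℤ) < 2 * (N : ℤ) := by positivity
      have heq : 2 * (N : ℤ) * (m - m') = ((a' : ℕ) : ℤ) - ((a : ℕ) : ℤ) := by linarith
      have hm : m = m' := by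
        by_contra hmm
        rcases lt_or_gt_of_ne hmm with h | h
        · have h5 : m - m' ≤ -1 := by omega
          have : 2 * (N : ℤ) * (m - m') ≤ 2 * (N : ℤ) * (-1) :=
            mul_le_mul_of_nonneg_left h5 (by positivity)
          linarith
        · have h5 : 1 ≤ m - m' := by omega
          have : 2 * (N : ℤ) * 1 ≤ 2 * (N : ℤ) * (m - m') :=
            mul_le_mul_of_nonneg_left h5 (by positivity)
          linarith
      subst hm
      have haa : ((a : ℕ) : ℤ) = ((a' : ℕ) : ℤ) := by linarith
      have : (a : ℕ) = (a' : ℕ) := by exact_mod_cast haa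
      simp [Fin.ext_iff, this]
    · rintro ⟨j, k⟩
      have hNpos : (0 : ℤ) < 2 * (N : ℤ) := by positivity
      set r : ℤ := (j - 2 * (N : ℤ) ^ 2 * k) % (2 * (N : ℤ)) with hr
      set q : ℤ := (j - 2 * (N : ℤ) ^ 2 * k) / (2 * (N : ℤ)) with hq
      have hr0 : 0 ≤ r := Int.emod_nonneg _ (by omega)
      have hrlt : r < 2 * (N : ℤ) := Int.emod_lt_of_pos _ hNpos
      have hrnat : r.toNat < 2 * N := by omega
      refine ⟨⟨(q, k), ⟨r.toNat, hrnat⟩⟩, ?_⟩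
      have hdm : 2 * (N : ℤ) * q + r = j - 2 * (N : ℤ) ^ 2 * k :=
        Int.mul_ediv_add_emod _ _
      have htn : ((r.toNat : ℕ) : ℤ) = r := Int.toNat_of_nonneg hr0
      simp only [hψ]
      have hfst : 2 * (N : ℤ) * q + 2 * (N : ℤ) ^ 2 * k + ((r.toNat : ℕ) : ℤ) = j := by
        rw [htn]; linarith
      rw [hfst]
  calc
    (∑' nm : ℤ × ℤ, ∑ a ∈ Finset.range (2 * N), ∑ c ∈ Finset.range (2 * N),
        Complex.exp (Complex.I * (Real.pi : ℂ) * ((c : ℂ) + (ε' : ℂ) / 2)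
            * ((nm.1 : ℂ) - (nm.2 : ℂ)) / (N : ℂ)) *
          Complex.exp (w * ((2 * (a : ℂ) + (ε : ℂ)) / (4 * (N : ℂ)) + (nm.1 : ℂ)) ^ 2
            + w' * ((2 * (a : ℂ) + (ε : ℂ)) / (4 * (N : ℂ)) + (nm.2 : ℂ)) ^ 2))
      = ∑' nm : ℤ × ℤ, atGG N ε ε' w w' nm :=
        tsum_congr fun nm => aux_step1 N hN ε ε' w w' nm
    _ = ∑' q : ℤ × ℤ, atGG N ε ε' w w' (g q) := (hginj.tsum_eq hsupp).symm
    _ = ∑' q : ℤ × ℤ, 2 * (N : ℂ) * ∑ a ∈ Finset.range (2 * N),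
          atHH N ε ε' w w' (2 * (N : ℤ) * q.1 + 2 * (N : ℤ) ^ 2 * q.2 + (a : ℤ), q.2) :=
        tsum_congr fun q => aux_stepB N hN ε ε' w w' q.1 q.2
    _ = 2 * (N : ℂ) * ∑' q : ℤ × ℤ, ∑ a ∈ Finset.range (2 * N),
          atHH N ε ε' w w' (2 * (N : ℤ) * q.1 + 2 * (N : ℤ) ^ 2 * q.2 + (a : ℤ), q.2) :=
        tsum_mul_left
    _ = 2 * (N : ℂ) * ∑' q : ℤ × ℤ, ∑' a : Fin (2 * N), atHH N ε ε' w w' (ψ (q, a)) := by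
        congr 1
        refine tsum_congr fun q => ?_
        rw [tsum_fintype]
        rw [← Fin.sum_univ_eq_sum_range (fun i =>
          atHH N ε ε' w w' (2 * (N : ℤ) * q.1 + 2 * (N : ℤ) ^ 2 * q.2 + ((i : ℕ) : ℤ), q.2))
          (2 * N)]
    _ = 2 * (N : ℂ) * ∑' x : (ℤ × ℤ) × Fin (2 * N), atHH N ε ε' w w' (ψ x) := by
        congr 1
        refine (Summable.tsum_prod' (f := fun x : (ℤ × ℤ) × Fin (2 * N) => atHH N ε ε' w w' (ψ x))
          ?_ ?_).symm
        · have h := ((Equiv.ofBijective ψ hbij).summable_iff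
            (f := atHH N ε ε' w w')).mpr hHs
          simpa only [Function.comp_def, Equiv.ofBijective_apply] using h
        · intro b
          exact Summable.of_finite
    _ = 2 * (N : ℂ) * ∑' p : ℤ × ℤ, atHH N ε ε' w w' p := by
        congr 1
        simpa only [Equiv.ofBijective_apply] using
          (Equiv.ofBijective ψ hbij).tsum_eq (atHH N ε ε' w w')
    _ = _ := rfl
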